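/- For p > 1 and a > b > 0, the power map g(x) = x^p satisfies PSE(a^p, b^p) < PSE(a, b), where PSE(x,y) = −(x/(x+y))log(x/(x+y)) − (y/(x+y))log(y/(x+y)). -/

import Mathlib

open Real

private noncomputable def Hent (t : ℝ) : ℝ := -(t * Real.log t) - (1 - t) * Real.log (1 - t)

private lemma Hent_hasDeriv {t : ℝ} (h0 : 0 < t) (h1 : t < 1) :
    HasDerivAt Hent (Real.log (1 - t) - Real.log t) t := by
  have h1' : (0:ℝ) < 1 - t := by linarith
  have A := Real.hasDerivAt_mul_log (ne_of_gt h0)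
  have B := Real.hasDerivAt_mul_log (x := 1 - t) (ne_of_gt h1')
  have B' : HasDerivAt (fun t : ℝ => (1 - t) * Real.log (1 - t))
      ((Real.log (1 - t) + 1) * (-1)) t := by
    exact B.comp t ((hasDerivAt_id t).const_sub 1)
  have := (A.neg).sub B'
  have e : (-(Real.log t + 1) - (Real.log (1 - t) + 1) * -1) = Real.log (1 - t) - Real.log t := by ring
  rw [e] at this
  exact this

private lemma Hent_strictAnti : StrictAntiOn Hent (Set.Ioo (1/2 : ℝ) 1) := by
  apply strictAntiOn_of_deriv_neg (convex_Ioo _ _)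
  · intro x hx
    exact ((Hent_hasDeriv (by linarith [hx.1]) hx.2).continuousAt).continuousWithinAt
  · intro x hx
    rw [interior_Ioo] at hx
    rw [(Hent_hasDeriv (by linarith [hx.1]) hx.2).deriv]
    have : Real.log (1 - x) < Real.log x :=
      Real.log_lt_log (by linarith [hx.2]) (by linarith [hx.1])
    linarith

theorem PSE_pow_lt (p a b : ℝ) (hp : 1 < p) (hb : 0 < b) (hab : b < a) :
    -((a ^ p / (a ^ p + b ^ p)) * Real.log (a ^ p / (a ^ p + b ^ p)))
      - (b ^ p / (a ^ p + b ^ p)) * Real.log (b ^ p / (a ^ p + b ^ p))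
    < -((a / (a + b)) * Real.log (a / (a + b)))
      - (b / (a + b)) * Real.log (b / (a + b)) := by
  have ha : 0 < a := hb.trans hab
  have hap : 0 < a ^ p := Real.rpow_pos_of_pos ha p
  have hbp : 0 < b ^ p := Real.rpow_pos_of_pos hb p
  have hs : 0 < a + b := by linarith
  have ht : 0 < a ^ p + b ^ p := by linarith
  have h1 : b / (a + b) = 1 - a / (a + b) := by field_simp; ring
  have h2 : b ^ p / (a ^ p + b ^ p) = 1 - a ^ p / (a ^ p + b ^ p) := by field_simp; ring
  have hs_half : 1/2 < a / (a + b) := by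
    rw [lt_div_iff₀ hs]; linarith
  have ht1 : a ^ p / (a ^ p + b ^ p) < 1 := by
    rw [div_lt_one ht]; linarith
  have hs1 : a / (a + b) < 1 := by
    rw [div_lt_one hs]; linarith
  have hst : a / (a + b) < a ^ p / (a ^ p + b ^ p) := by
    rw [div_lt_div_iff₀ hs ht]
    have key : b ^ (p-1) < a ^ (p-1) :=
      Real.rpow_lt_rpow hb.le hab (by linarith)
    have ha' : a ^ p = a ^ (p-1) * a := by
      rw [show p = (p-1)+1 by ring, Real.rpow_add_one ha.ne']; ring_nf
    have hb' : b ^ p = b ^ (p-1) * b := by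
      rw [show p = (p-1)+1 by ring, Real.rpow_add_one hb.ne']; ring_nf
    have hkey : b ^ (p-1) * (a*b) < a ^ (p-1) * (a*b) :=
      mul_lt_mul_of_pos_right key (mul_pos ha hb)
    nlinarith [hkey, ha', hb']
  rw [h1, h2]
  have := Hent_strictAnti ⟨hs_half, hs1⟩ ⟨hs_half.trans hst, ht1⟩ hst
  unfold Hent at this
  exact this
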